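/- Let P_1, ..., P_m be special ample polytopes, (x_1, ..., x_m) ∈ Λ(P_1) × ⋯ × Λ(P_m) a tuple of winning elements, and suppose (x_1', ..., x_m') is obtained from it by a simple move: for some simple root α and indices j, k with ⟨x_j, α^∨⟩ ≤ −1 and ⟨x_k, α^∨⟩ ≥ 1, set x_j' = x_j + α, x_k' = x_k − α, and x_ℓ' = x_ℓ otherwise. Then (x_1', ..., x_m') ∈ Λ(P_1) × ⋯ × Λ(P_m) and each x_ℓ' is winning. -/

import Mathlib

open scoped BigOperators

variable {V : Type*} [NormedAddCommGroup V] [InnerProductSpace ℝ V]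

/-- The pairing `⟨x, y^∨⟩ = 2(x,y)/(y,y)` of `x` with the coroot of `y`. -/
noncomputable def pairing (x y : V) : ℝ := 2 * (inner ℝ x y : ℝ) / (inner ℝ y y : ℝ)

/-- An irreducible, reduced, crystallographic root system in a Euclidean space `V`. -/
structure RootSystemData (V : Type*) [NormedAddCommGroup V] [InnerProductSpace ℝ V] :
    Type _ where
  Δ : Set V
  finite : Δ.Finite
  nonzero : ∀ α ∈ Δ, α ≠ 0
  spanning : Submodule.span ℝ Δ = ⊤
  neg_mem : ∀ α ∈ Δ, -α ∈ Δ
  reduced : ∀ α ∈ Δ, ∀ c : ℝ, c • α ∈ Δ → c = 1 ∨ c = -1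
  crystallographic : ∀ α ∈ Δ, ∀ β ∈ Δ, ∃ n : ℤ, pairing α β = n
  reflect_mem : ∀ α ∈ Δ, ∀ β ∈ Δ, β - pairing β α • α ∈ Δ
  irreducible : ∀ s t : Set V, s ∪ t = Δ →
    (∀ α ∈ s, ∀ β ∈ t, (inner ℝ α β : ℝ) = 0) → s = ∅ ∨ t = ∅

variable {R : RootSystemData V}

/-- A base (system of simple roots) of the root system, corresponding to a Weyl chamber. -/
structure Base (R : RootSystemData V) where
  S : Finset V
  subset : ↑S ⊆ R.Δ
  indep : LinearIndependent ℝ ((↑) : {x : V // x ∈ S} → V)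
  decomp : ∀ α ∈ R.Δ, ∃ c : V → ℤ, α = ∑ β ∈ S, (c β : ℝ) • β ∧
    ((∀ β ∈ S, 0 ≤ c β) ∨ (∀ β ∈ S, c β ≤ 0))

/-- `x` is dominant with respect to the chamber given by the base `B`. -/
def IsDominant (B : Base R) (x : V) : Prop := ∀ α ∈ B.S, 0 ≤ pairing x α

/-- `β` is a positive root with respect to the base `B`. -/
def Base.IsPos (B : Base R) (β : V) : Prop :=
  β ∈ R.Δ ∧ ∃ c : V → ℕ, β = ∑ α ∈ B.S, (c α : ℝ) • α

/-- The dominance order: `y - x` is a nonnegative integer combination of simple roots. -/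
def domLE (B : Base R) (x y : V) : Prop :=
  ∃ c : V → ℕ, y - x = ∑ α ∈ B.S, (c α : ℝ) • α

/-- `x` is a weight: its pairing with every coroot is an integer. -/
def IsWeight (R : RootSystemData V) (x : V) : Prop :=
  ∀ α ∈ R.Δ, ∃ n : ℤ, pairing x α = n

/-- An ample (`T`-equivariant ample) polytope for the toric variety of the Weyl fan:
vertices `μ B` indexed by Weyl chambers (equivalently, bases `B`), such that vertices at
adjacent chambers differ by a positive integer multiple of the separating root. The chamber
adjacent to `B` across the wall of the simple root `α ∈ B.S` is the one whose base is the
reflection `s_α(B)`. -/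
structure AmplePolytope (R : RootSystemData V) where
  μ : Base R → V
  weight : ∀ B : Base R, IsWeight R (μ B)
  ample : ∀ B B' : Base R, ∀ α ∈ B.S,
    (∀ β : V, β ∈ B'.S ↔ ∃ γ ∈ B.S, β = γ - pairing γ α • α) →
    ∃ r : ℤ, 0 < r ∧ μ B - μ B' = (r : ℝ) • α

/-- The polytope `P` itself: the convex hull of its vertices. -/
noncomputable def AmplePolytope.carrier (P : AmplePolytope R) : Set V :=
  convexHull ℝ (Set.range P.μ)

/-- The root lattice `Y`. -/
def rootLattice (R : RootSystemData V) : AddSubgroup V := AddSubgroup.closure R.Δ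

/-- `Λ(P)`: the lattice points of `P` lying in the coset `Y + μ_σ` of the root lattice. -/
noncomputable def latticePts (P : AmplePolytope R) : Set V :=
  {x | x ∈ P.carrier ∧ ∀ B : Base R, x - P.μ B ∈ rootLattice R}

/-- The polytope is special: each vertex is dominant for its own chamber. -/
def IsSpecial (P : AmplePolytope R) : Prop := ∀ B : Base R, ∀ α ∈ B.S, 0 ≤ pairing (P.μ B) α

/-- One step of the numbers game: firing the vertex corresponding to the simple root `α`
replaces `x` by its reflection `x - ⟨x, α^∨⟩ α`. -/
noncomputable def fireRoot (x α : V) : V := x - pairing x α • α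

/-- The result of playing the firing sequence `l` starting from `x`. -/
noncomputable def playRes (x : V) (l : List V) : V := l.foldl fireRoot x

/-- Legality of a firing sequence for the usual numbers game: each fired simple root has
negative amplitude when fired. -/
def NGLegal (B : Base R) : V → List V → Prop
  | _, [] => True
  | x, α :: t => α ∈ B.S ∧ pairing x α < 0 ∧ NGLegal B (fireRoot x α) t

/-- A configuration is allowed in the numbers game with a cutoff: all amplitudes `≥ -1`. -/
def AllowedConf (B : Base R) (x : V) : Prop := ∀ α ∈ B.S, -1 ≤ pairing x α

/-- Legality for the numbers game with a cutoff: fired amplitudes are negative, and every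
configuration along the way (including the first and last) is allowed. -/
def CutoffLegal (B : Base R) : V → List V → Prop
  | x, [] => AllowedConf B x
  | x, α :: t => AllowedConf B x ∧ α ∈ B.S ∧ pairing x α < 0 ∧ CutoffLegal B (fireRoot x α) t

/-- `x` is winning for the numbers game with a cutoff. -/
def CutoffWinning (B : Base R) (x : V) : Prop :=
  ∃ l : List V, CutoffLegal B x l ∧ IsDominant B (playRes x l)

/-- The winning criterion: `⟨x, β^∨⟩ ≥ -1` for all positive roots `β`. -/
def WinningCrit (B : Base R) (x : V) : Prop := ∀ β : V, B.IsPos β → -1 ≤ pairing x β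

/-- `α` is `P`-progressive for `x`: either `x` is dominant and `α` has minimum length among
simple roots with `x + α ⪯ μ`, or `⟨x, α^∨⟩ ≤ -1`. -/
def Progressive (B : Base R) (P : AmplePolytope R) (x α : V) : Prop :=
  α ∈ B.S ∧
    ((IsDominant B x ∧ domLE B (x + α) (P.μ B) ∧
        ∀ β ∈ B.S, domLE B (x + β) (P.μ B) → ‖α‖ ≤ ‖β‖) ∨
      pairing x α ≤ -1)

namespace Stmt19

local notation "⟪" x ", " y "⟫" => @inner ℝ _ _ x y

variable {V : Type*} [NormedAddCommGroup V] [InnerProductSpace ℝ V]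

lemma inner_self_pos' {y : V} (hy : y ≠ 0) : (0:ℝ) < ⟪y, y⟫ :=
  lt_of_le_of_ne real_inner_self_nonneg (Ne.symm (inner_self_ne_zero.mpr hy))

lemma pairing_def (x y : V) : pairing x y = 2 * ⟪x, y⟫ / ⟪y, y⟫ := rfl

lemma pairing_add_left (x y z : V) : pairing (x + y) z = pairing x z + pairing y z := by
  simp only [pairing, inner_add_left]; ring

lemma pairing_sub_left (x y z : V) : pairing (x - y) z = pairing x z - pairing y z := by
  simp only [pairing, inner_sub_left]; ring

lemma pairing_neg_left (x z : V) : pairing (-x) z = - pairing x z := by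
  simp only [pairing, inner_neg_left]; ring

lemma pairing_zero_left (z : V) : pairing 0 z = 0 := by
  simp [pairing]

lemma pairing_smul_left (c : ℝ) (x z : V) : pairing (c • x) z = c * pairing x z := by
  simp only [pairing, real_inner_smul_left]; ring

lemma pairing_neg_right (x z : V) : pairing x (-z) = - pairing x z := by
  unfold pairing
  rw [inner_neg_neg, inner_neg_right]
  ring

lemma pairing_self {y : V} (hy : y ≠ 0) : pairing y y = 2 := by
  have := inner_self_pos' hy
  rw [pairing_def, mul_div_assoc, div_self this.ne', mul_one]

lemma pairing_nonneg_iff {x y : V} (hy : y ≠ 0) : 0 ≤ pairing x y ↔ 0 ≤ ⟪x, y⟫ := by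
  have h := inner_self_pos' hy
  constructor
  · intro hp
    by_contra hneg
    push_neg at hneg
    have : pairing x y < 0 := div_neg_of_neg_of_pos (by linarith) h
    linarith
  · intro hi
    exact div_nonneg (by linarith) h.le

lemma pairing_pos_iff {x y : V} (hy : y ≠ 0) : 0 < pairing x y ↔ 0 < ⟪x, y⟫ := by
  have h := inner_self_pos' hy
  constructor
  · intro hp
    by_contra hneg
    push_neg at hneg
    have : pairing x y ≤ 0 := div_nonpos_of_nonpos_of_nonneg (by linarith) h.le
    linarith
  · intro hi
    exact div_pos (by linarith) h

lemma pairing_nonpos_iff {x y : V} (hy : y ≠ 0) : pairing x y ≤ 0 ↔ ⟪x, y⟫ ≤ 0 := by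
  constructor
  · intro h; by_contra hc; push_neg at hc
    have := (pairing_pos_iff hy).mpr hc; linarith
  · intro h; by_contra hc; push_neg at hc
    have := (pairing_pos_iff hy).mp hc; linarith

lemma pairing_sum_left {ι : Type*} (s : Finset ι) (f : ι → V) (z : V) :
    pairing (∑ i ∈ s, f i) z = ∑ i ∈ s, pairing (f i) z := by
  classical
  induction s using Finset.induction_on with
  | empty => simp [pairing_zero_left]
  | insert _ _ h ih =>
    rw [Finset.sum_insert h, Finset.sum_insert h, pairing_add_left, ih]

lemma inner_sum_right {ι : Type*} (s : Finset ι) (f : ι → V) (z : V) :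
    ⟪z, (∑ i ∈ s, f i)⟫ = ∑ i ∈ s, ⟪z, f i⟫ := by
  exact inner_sum s f z

/-! ### fireRoot -/

lemma fireRoot_apply (x γ : V) : fireRoot x γ = x - pairing x γ • γ := rfl

lemma fireRoot_add (x y γ : V) : fireRoot (x + y) γ = fireRoot x γ + fireRoot y γ := by
  simp only [fireRoot, pairing_add_left, add_smul]; abel

lemma fireRoot_sub (x y γ : V) : fireRoot (x - y) γ = fireRoot x γ - fireRoot y γ := by
  simp only [fireRoot, pairing_sub_left, sub_smul]; abel

lemma fireRoot_smul (c : ℝ) (x γ : V) : fireRoot (c • x) γ = c • fireRoot x γ := by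
  simp only [fireRoot, pairing_smul_left, smul_sub, mul_smul]

lemma fireRoot_self {γ : V} (hγ : γ ≠ 0) : fireRoot γ γ = -γ := by
  rw [fireRoot, pairing_self hγ, two_smul]; abel

lemma pairing_fireRoot_left (x γ z : V) :
    pairing (fireRoot x γ) z = pairing x z - pairing x γ * pairing γ z := by
  rw [fireRoot, pairing_sub_left, pairing_smul_left]

lemma pairing_fireRoot_self (x : V) {γ : V} (hγ : γ ≠ 0) :
    pairing (fireRoot x γ) γ = - pairing x γ := by
  rw [pairing_fireRoot_left, pairing_self hγ]; ring

lemma fireRoot_fireRoot (x : V) {γ : V} (hγ : γ ≠ 0) : fireRoot (fireRoot x γ) γ = x := by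
  rw [fireRoot, pairing_fireRoot_self x hγ, fireRoot, neg_smul]
  abel

lemma inner_fireRoot_fireRoot (u v : V) {γ : V} (hγ : γ ≠ 0) :
    ⟪fireRoot u γ, fireRoot v γ⟫ = ⟪u, v⟫ := by
  have hg := inner_self_pos' hγ
  simp only [fireRoot, inner_sub_left, inner_sub_right, real_inner_smul_left,
    real_inner_smul_right, pairing]
  rw [real_inner_comm γ v, real_inner_comm γ u]
  field_simp
  ring

lemma inner_fireRoot_norm (v : V) {γ : V} (hγ : γ ≠ 0) :
    ⟪fireRoot v γ, fireRoot v γ⟫ = ⟪v, v⟫ := inner_fireRoot_fireRoot v v hγ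

lemma pairing_fireRoot_fireRoot (u v : V) {γ : V} (hγ : γ ≠ 0) :
    pairing (fireRoot u γ) (fireRoot v γ) = pairing u v := by
  simp only [pairing, inner_fireRoot_fireRoot u v hγ, inner_fireRoot_norm v hγ]

lemma pairing_fireRoot_right (u v : V) {γ : V} (hγ : γ ≠ 0) :
    pairing u (fireRoot v γ) = pairing (fireRoot u γ) v := by
  conv_lhs => rw [← fireRoot_fireRoot u hγ]
  rw [pairing_fireRoot_fireRoot _ v hγ]

lemma pairing_fireRoot_right' (u v : V) {γ : V} (hγ : γ ≠ 0) :
    pairing u (fireRoot v γ) = pairing u v - pairing u γ * pairing γ v := by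
  rw [pairing_fireRoot_right u v hγ, pairing_fireRoot_left]

end Stmt19
namespace Stmt19

variable {V : Type*} [NormedAddCommGroup V] [InnerProductSpace ℝ V] {R : RootSystemData V}

local notation "⟪" x ", " y "⟫" => @inner ℝ _ _ x y

/-- Integer pairing predicate. -/
def IsInt (a : ℝ) : Prop := ∃ n : ℤ, a = n

lemma IsInt.add {a b : ℝ} (ha : IsInt a) (hb : IsInt b) : IsInt (a + b) := by
  obtain ⟨n, rfl⟩ := ha; obtain ⟨m, rfl⟩ := hb; exact ⟨n + m, by push_cast; ring⟩

lemma IsInt.neg {a : ℝ} (ha : IsInt a) : IsInt (-a) := by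
  obtain ⟨n, rfl⟩ := ha; exact ⟨-n, by push_cast; ring⟩

lemma IsInt.sub {a b : ℝ} (ha : IsInt a) (hb : IsInt b) : IsInt (a - b) := by
  obtain ⟨n, rfl⟩ := ha; obtain ⟨m, rfl⟩ := hb; exact ⟨n - m, by push_cast; ring⟩

lemma IsInt.zero : IsInt (0 : ℝ) := ⟨0, by simp⟩

lemma IsInt.one : IsInt (1 : ℝ) := ⟨1, by simp⟩

lemma IsInt.mul {a b : ℝ} (ha : IsInt a) (hb : IsInt b) : IsInt (a * b) := by
  obtain ⟨n, rfl⟩ := ha; obtain ⟨m, rfl⟩ := hb; exact ⟨n * m, by push_cast; ring⟩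

lemma IsInt.le_neg_one {a : ℝ} (ha : IsInt a) (h : a < 0) : a ≤ -1 := by
  obtain ⟨n, rfl⟩ := ha
  have : n < 0 := by exact_mod_cast h
  have : n ≤ -1 := by omega
  exact_mod_cast this

lemma IsInt.one_le {a : ℝ} (ha : IsInt a) (h : 0 < a) : 1 ≤ a := by
  obtain ⟨n, rfl⟩ := ha
  have : 0 < n := by exact_mod_cast h
  have : 1 ≤ n := by omega
  exact_mod_cast this

lemma IsInt.one_le_of_two_le_two_mul {a : ℝ} (ha : IsInt a) (h : 1 ≤ 2 * a) : 1 ≤ a := by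
  refine ha.one_le ?_
  linarith

lemma IsInt.sum {ι : Type*} (s : Finset ι) (f : ι → ℝ) (h : ∀ i ∈ s, IsInt (f i)) :
    IsInt (∑ i ∈ s, f i) := by
  classical
  induction s using Finset.induction_on with
  | empty => simpa using IsInt.zero
  | insert _ _ hnot ih =>
    rename_i a s
    rw [Finset.sum_insert hnot]
    exact (h a (Finset.mem_insert_self a s)).add
      (ih fun i hi => h i (Finset.mem_insert_of_mem hi))

/-- Pairing with a root is an integer for any element of the root lattice. -/
lemma rootLattice_pairing_int {v : V} (hv : v ∈ rootLattice R) {β : V} (hβ : β ∈ R.Δ) :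
    IsInt (pairing v β) := by
  induction hv using AddSubgroup.closure_induction with
  | mem a ha => exact R.crystallographic a ha β hβ
  | zero => simpa [pairing_zero_left] using IsInt.zero
  | add a b _ _ iha ihb => simpa [pairing_add_left] using iha.add ihb
  | neg a _ iha => simpa [pairing_neg_left] using iha.neg

lemma root_ne_zero {β : V} (hβ : β ∈ R.Δ) : β ≠ 0 := R.nonzero β hβ

/-- Strict Cauchy-Schwarz: for roots that are not collinear. -/
lemma pairing_mul_lt_four {β γ : V} (hβ : β ∈ R.Δ) (hγ : γ ∈ R.Δ)
    (hne : ∀ c : ℝ, β ≠ c • γ) :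
    pairing β γ * pairing γ β < 4 := by
  have hβ0 := root_ne_zero hβ
  have hγ0 := root_ne_zero hγ
  have hg := inner_self_pos' hγ0
  have hb := inner_self_pos' hβ0
  have key : ⟪β, γ⟫ * ⟪β, γ⟫ < ⟪β, β⟫ * ⟪γ, γ⟫ := by
    set w : V := ⟪γ, γ⟫ • β - ⟪β, γ⟫ • γ with hw
    have hw0 : w ≠ 0 := by
      intro h
      refine hne (⟪β, γ⟫ / ⟪γ, γ⟫) ?_
      have h' : ⟪γ, γ⟫ • β - ⟪β, γ⟫ • γ = 0 := by rw [← hw]; exact h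
      have heq : ⟪γ, γ⟫ • β = ⟪β, γ⟫ • γ := sub_eq_zero.mp h'
      calc β = (⟪γ, γ⟫)⁻¹ • (⟪γ, γ⟫ • β) := by
              rw [smul_smul, inv_mul_cancel₀ hg.ne', one_smul]
        _ = (⟪γ, γ⟫)⁻¹ • (⟪β, γ⟫ • γ) := by rw [heq]
        _ = (⟪β, γ⟫ / ⟪γ, γ⟫) • γ := by rw [smul_smul, div_eq_inv_mul]
    have hpos : (0:ℝ) < ⟪w, w⟫ := inner_self_pos' hw0
    have hexp : ⟪w, w⟫ = ⟪γ, γ⟫ * (⟪β, β⟫ * ⟪γ, γ⟫ - ⟪β, γ⟫ * ⟪β, γ⟫) := by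
      simp only [hw, inner_sub_left, inner_sub_right, real_inner_smul_left,
        real_inner_smul_right]
      rw [real_inner_comm γ β]
      ring
    nlinarith [hpos, hg]
  have : pairing β γ * pairing γ β = 4 * (⟪β, γ⟫ * ⟪β, γ⟫) / (⟪β, β⟫ * ⟪γ, γ⟫) := by
    simp only [pairing]
    rw [real_inner_comm γ β]
    field_simp
    ring
  rw [this]
  rw [div_lt_iff₀ (by positivity)]
  nlinarith

/-- Root string: if two roots have positive inner product and are distinct,
their difference is a root. -/
lemma root_sub_mem {β γ : V} (hβ : β ∈ R.Δ) (hγ : γ ∈ R.Δ)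
    (hne : β ≠ γ) (hpos : (0:ℝ) < ⟪β, γ⟫) : β - γ ∈ R.Δ := by
  have hβ0 := root_ne_zero hβ
  have hγ0 := root_ne_zero hγ
  have hp : 0 < pairing β γ := (pairing_pos_iff hγ0).mpr hpos
  have hq : 0 < pairing γ β := (pairing_pos_iff hβ0).mpr (by rwa [real_inner_comm])
  have hpint := R.crystallographic β hβ γ hγ
  have hqint := R.crystallographic γ hγ β hβ
  have hp1 : 1 ≤ pairing β γ := IsInt.one_le hpint hp
  have hq1 : 1 ≤ pairing γ β := IsInt.one_le hqint hq
  have hcol : ∀ c : ℝ, β ≠ c • γ := by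
    intro c hc
    have := R.reduced γ hγ c (hc ▸ hβ)
    rcases this with h1 | h1
    · exact hne (by rw [hc, h1, one_smul])
    · rw [hc, h1, neg_smul, one_smul] at hpos
      rw [inner_neg_left] at hpos
      linarith [inner_self_pos' hγ0]
  have hlt := pairing_mul_lt_four hβ hγ hcol
  -- one of the two pairings is 1
  have : pairing β γ = 1 ∨ pairing γ β = 1 := by
    obtain ⟨np, hnp⟩ := hpint
    obtain ⟨nq, hnq⟩ := hqint
    have hnp1 : 1 ≤ np := by rw [hnp] at hp1; exact_mod_cast hp1
    have hnq1 : 1 ≤ nq := by rw [hnq] at hq1; exact_mod_cast hq1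
    have hlt' : np * nq < 4 := by
      rw [hnp, hnq] at hlt; exact_mod_cast hlt
    have : np = 1 ∨ nq = 1 := by
      by_contra hcon
      push_neg at hcon
      have h2 : 2 ≤ np := by omega
      have h3 : 2 ≤ nq := by omega
      nlinarith
    rcases this with h | h
    · left; rw [hnp, h]; norm_num
    · right; rw [hnq, h]; norm_num
  rcases this with h | h
  · have := R.reflect_mem γ hγ β hβ
    rwa [h, one_smul] at this
  · have := R.reflect_mem β hβ γ hγ
    rw [h, one_smul] at this
    have := R.neg_mem _ this
    rwa [neg_sub] at this

end Stmt19
namespace Stmt19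

variable {V : Type*} [NormedAddCommGroup V] [InnerProductSpace ℝ V] {R : RootSystemData V}

local notation "⟪" x ", " y "⟫" => @inner ℝ _ _ x y

attribute [local instance] Classical.propDecidable

lemma mem_root {C : Base R} {γ : V} (hγ : γ ∈ C.S) : γ ∈ R.Δ :=
  C.subset (Finset.mem_coe.mpr hγ)

lemma span_base (C : Base R) : Submodule.span ℝ (↑C.S : Set V) = ⊤ := by
  rw [eq_top_iff, ← R.spanning]
  apply Submodule.span_le.mpr
  intro a ha
  obtain ⟨c, hsum, _⟩ := C.decomp a ha
  rw [hsum]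
  exact Submodule.sum_mem _ fun β hβ =>
    Submodule.smul_mem _ _ (Submodule.subset_span (Finset.mem_coe.mpr hβ))

noncomputable def bas (C : Base R) : Module.Basis {a : V // a ∈ C.S} ℝ V :=
  Module.Basis.mk C.indep (by
    have h : Set.range ((↑) : {a : V // a ∈ C.S} → V) = (↑C.S : Set V) := by
      ext v; simp
    rw [h, span_base C])

lemma bas_apply (C : Base R) (i : {a : V // a ∈ C.S}) : bas C i = (i : V) := by
  simp [bas]

/-- The coordinate functional of the basis given by the simple roots of `C`. -/
noncomputable def cf (C : Base R) (γ : V) : V →ₗ[ℝ] ℝ :=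
  if h : γ ∈ C.S then (bas C).coord ⟨γ, h⟩ else 0

lemma cf_apply_mem (C : Base R) {γ : V} (h : γ ∈ C.S) (u : V) :
    cf C γ u = (bas C).repr u ⟨γ, h⟩ := by
  rw [cf, dif_pos h, Module.Basis.coord_apply]

lemma cf_basis_self (C : Base R) {γ : V} (hγ : γ ∈ C.S) : cf C γ γ = 1 := by
  rw [cf_apply_mem C hγ]
  show (bas C).repr ((⟨γ, hγ⟩ : {a : V // a ∈ C.S}) : V) ⟨γ, hγ⟩ = 1
  rw [← bas_apply C ⟨γ, hγ⟩, Module.Basis.repr_self_apply, if_pos rfl]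

lemma cf_basis_ne (C : Base R) {γ η : V} (hγ : γ ∈ C.S) (hη : η ∈ C.S) (hne : η ≠ γ) :
    cf C γ η = 0 := by
  rw [cf_apply_mem C hγ]
  show (bas C).repr ((⟨η, hη⟩ : {a : V // a ∈ C.S}) : V) ⟨γ, hγ⟩ = 0
  rw [← bas_apply C ⟨η, hη⟩, Module.Basis.repr_self_apply, if_neg]
  intro h
  exact hne (congrArg Subtype.val h)

lemma sum_cf (C : Base R) (u : V) : ∑ γ ∈ C.S, cf C γ u • γ = u := by
  calc ∑ γ ∈ C.S, cf C γ u • γ = ∑ i ∈ C.S.attach, cf C (↑i) u • (↑i : V) :=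
        (Finset.sum_attach _ _).symm
    _ = ∑ i ∈ C.S.attach, (bas C).repr u i • bas C i := by
        apply Finset.sum_congr rfl
        intro i _
        rw [cf_apply_mem C i.2, bas_apply]
    _ = u := by
        rw [← Finset.univ_eq_attach]
        exact (bas C).sum_repr u

lemma cf_of_sum (C : Base R) (c : V → ℝ) {γ : V} (hγ : γ ∈ C.S) :
    cf C γ (∑ β ∈ C.S, c β • β) = c γ := by
  rw [map_sum]
  rw [Finset.sum_eq_single γ]
  · rw [map_smul, cf_basis_self C hγ, smul_eq_mul, mul_one]
  · intro β hβ hne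
    rw [map_smul, cf_basis_ne C hγ hβ hne, smul_eq_mul, mul_zero]
  · intro h; exact absurd hγ h

lemma cf_root_eq (C : Base R) {δ : V} (hδ : δ ∈ R.Δ) :
    ∃ c : V → ℤ, (∀ γ ∈ C.S, cf C γ δ = (c γ : ℝ)) ∧
      ((∀ β ∈ C.S, 0 ≤ c β) ∨ (∀ β ∈ C.S, c β ≤ 0)) := by
  obtain ⟨c, hsum, hsign⟩ := C.decomp δ hδ
  refine ⟨c, fun γ hγ => ?_, hsign⟩
  rw [hsum, cf_of_sum C (fun β => ((c β : ℤ) : ℝ)) hγ]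

lemma cf_root_int (C : Base R) {γ δ : V} (hγ : γ ∈ C.S) (hδ : δ ∈ R.Δ) :
    IsInt (cf C γ δ) := by
  obtain ⟨c, hc, _⟩ := cf_root_eq C hδ
  exact ⟨c γ, hc γ hγ⟩

lemma root_dichotomy (C : Base R) {δ : V} (hδ : δ ∈ R.Δ) :
    (∀ γ ∈ C.S, 0 ≤ cf C γ δ) ∨ (∀ γ ∈ C.S, cf C γ δ ≤ 0) := by
  obtain ⟨c, hc, hsign⟩ := cf_root_eq C hδ
  rcases hsign with h | h
  · left; intro γ hγ; rw [hc γ hγ]; exact_mod_cast h γ hγ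
  · right; intro γ hγ; rw [hc γ hγ]; exact_mod_cast h γ hγ

lemma cf_lattice_int (C : Base R) {γ : V} (hγ : γ ∈ C.S) {v : V}
    (hv : v ∈ rootLattice R) : IsInt (cf C γ v) := by
  induction hv using AddSubgroup.closure_induction with
  | mem a ha => exact cf_root_int C hγ ha
  | zero => exact ⟨0, by simp⟩
  | add a b _ _ iha ihb => simpa [map_add] using iha.add ihb
  | neg a _ iha => simpa [map_neg] using iha.neg

/-- Positivity of a root w.r.t. a base, via coordinates. -/
def PosR (C : Base R) (δ : V) : Prop := δ ∈ R.Δ ∧ ∀ γ ∈ C.S, 0 ≤ cf C γ δ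

lemma posR_or (C : Base R) {δ : V} (hδ : δ ∈ R.Δ) : PosR C δ ∨ PosR C (-δ) := by
  rcases root_dichotomy C hδ with h | h
  · exact Or.inl ⟨hδ, h⟩
  · refine Or.inr ⟨R.neg_mem δ hδ, fun γ hγ => ?_⟩
    rw [map_neg]
    linarith [h γ hγ]

lemma PosR.isPos {C : Base R} {δ : V} (h : PosR C δ) : C.IsPos δ := by
  obtain ⟨hδ, hpos⟩ := h
  obtain ⟨c, hc, _⟩ := cf_root_eq C hδ
  refine ⟨hδ, fun v => (c v).toNat, ?_⟩
  have : ∀ γ ∈ C.S, ((( c γ).toNat : ℕ) : ℝ) = cf C γ δ := by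
    intro γ hγ
    rw [hc γ hγ]
    have h0 : (0:ℝ) ≤ (c γ : ℝ) := by rw [← hc γ hγ]; exact hpos γ hγ
    have : 0 ≤ c γ := by exact_mod_cast h0
    exact_mod_cast Int.toNat_of_nonneg this
  calc δ = ∑ γ ∈ C.S, cf C γ δ • γ := (sum_cf C δ).symm
    _ = ∑ γ ∈ C.S, (((c γ).toNat : ℕ) : ℝ) • γ := by
        apply Finset.sum_congr rfl
        intro γ hγ; rw [this γ hγ]

lemma isPos_posR {C : Base R} {δ : V} (h : C.IsPos δ) : PosR C δ := by
  obtain ⟨hδ, c, hc⟩ := h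
  refine ⟨hδ, fun γ hγ => ?_⟩
  rw [hc, cf_of_sum C (fun β => ((c β : ℕ) : ℝ)) hγ]
  positivity

lemma simple_isPos {C : Base R} {γ : V} (hγ : γ ∈ C.S) : C.IsPos γ := by
  classical
  refine ⟨mem_root hγ, fun v => if v = γ then 1 else 0, ?_⟩
  rw [Finset.sum_eq_single γ]
  · simp
  · intro β hβ hne; simp [hne]
  · intro h; exact absurd hγ h

lemma exists_other_coord (C : Base R) {δ γ0 : V} (hδ : δ ∈ R.Δ)
    (hpos : ∀ γ ∈ C.S, 0 ≤ cf C γ δ) (hγ0 : γ0 ∈ C.S) (hne : δ ≠ γ0) :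
    ∃ η ∈ C.S, η ≠ γ0 ∧ 0 < cf C η δ := by
  by_contra hcon
  push_neg at hcon
  have hz : ∀ η ∈ C.S, η ≠ γ0 → cf C η δ = 0 := fun η hη hn =>
    le_antisymm (hcon η hη hn) (hpos η hη)
  have hcollapse : δ = cf C γ0 δ • γ0 := by
    conv_lhs => rw [← sum_cf C δ]
    rw [Finset.sum_eq_single γ0]
    · intro β hβ hne; rw [hz β hβ hne, zero_smul]
    · intro h; exact absurd hγ0 h
  rcases R.reduced γ0 (mem_root hγ0) (cf C γ0 δ) (hcollapse ▸ hδ) with h1 | h1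
  · rw [h1, one_smul] at hcollapse; exact hne hcollapse
  · have := hpos γ0 hγ0; rw [h1] at this; linarith

lemma obtuse (C : Base R) {γ η : V} (hγ : γ ∈ C.S) (hη : η ∈ C.S) (hne : γ ≠ η) :
    ⟪γ, η⟫ ≤ 0 := by
  by_contra hcon
  push_neg at hcon
  have hγΔ := mem_root hγ
  have hηΔ := mem_root hη
  have hη0 := root_ne_zero hηΔ
  have hp : 0 < pairing γ η := (pairing_pos_iff hη0).mpr hcon
  have hρ : γ - pairing γ η • η ∈ R.Δ := R.reflect_mem η hηΔ γ hγΔ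
  have h1 : cf C γ (γ - pairing γ η • η) = 1 := by
    rw [map_sub, map_smul, cf_basis_self C hγ, cf_basis_ne C hγ hη (Ne.symm hne),
      smul_eq_mul, mul_zero, sub_zero]
  have h2 : cf C η (γ - pairing γ η • η) = -pairing γ η := by
    rw [map_sub, map_smul, cf_basis_ne C hη hγ hne, cf_basis_self C hη,
      smul_eq_mul, mul_one, zero_sub]
  rcases root_dichotomy C hρ with h | h
  · have := h η hη; rw [h2] at this; linarith
  · have := h γ hγ; rw [h1] at this; linarith

lemma pairing_expand (C : Base R) (u z : V) :
    pairing u z = ∑ γ ∈ C.S, cf C γ u * pairing γ z := by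
  conv_lhs => rw [← sum_cf C u]
  rw [pairing_sum_left]
  exact Finset.sum_congr rfl fun γ _ => pairing_smul_left _ _ _

lemma inner_expand (C : Base R) (z u : V) :
    ⟪z, u⟫ = ∑ γ ∈ C.S, cf C γ u * ⟪z, γ⟫ := by
  conv_lhs => rw [← sum_cf C u]
  rw [inner_sum]
  exact Finset.sum_congr rfl fun γ _ => real_inner_smul_right _ _ _

lemma dominant_inner_nonneg (C : Base R) {μ δ : V}
    (hdom : ∀ γ ∈ C.S, 0 ≤ pairing μ γ) (hδpos : ∀ γ ∈ C.S, 0 ≤ cf C γ δ) :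
    0 ≤ ⟪μ, δ⟫ := by
  rw [inner_expand C μ δ]
  apply Finset.sum_nonneg
  intro γ hγ
  have hγ0 := root_ne_zero (mem_root hγ : γ ∈ R.Δ)
  exact mul_nonneg (hδpos γ hγ) ((pairing_nonneg_iff hγ0).mp (hdom γ hγ))

end Stmt19
namespace Stmt19

variable {V : Type*} [NormedAddCommGroup V] [InnerProductSpace ℝ V] {R : RootSystemData V}

local notation "⟪" x ", " y "⟫" => @inner ℝ _ _ x y

attribute [local instance] Classical.propDecidable

lemma Base.ext' {B1 B2 : Base R} (h : B1.S = B2.S) : B1 = B2 := by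
  cases B1; cases B2
  simp only at h
  subst h
  rfl

lemma baseFinite (R : RootSystemData V) : Finite (Base R) := by
  classical
  have : ∀ B : Base R, B.S ∈ R.finite.toFinset.powerset := by
    intro B
    rw [Finset.mem_powerset]
    intro a ha
    rw [Set.Finite.mem_toFinset]
    exact B.subset ha
  exact Finite.of_injective (fun B => (⟨B.S, this B⟩ : {t // t ∈ R.finite.toFinset.powerset}))
    (fun B1 B2 h => Base.ext' (congrArg Subtype.val h))

/-- The reflection in `γ` as a linear map. -/
noncomputable def fireLM (γ : V) : V →ₗ[ℝ] V where
  toFun x := fireRoot x γ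
  map_add' x y := fireRoot_add x y γ
  map_smul' c x := fireRoot_smul c x γ

lemma fireLM_apply (γ x : V) : fireLM γ x = fireRoot x γ := rfl

lemma fire_injective {γ : V} (hγ : γ ≠ 0) : Function.Injective (fun x : V => fireRoot x γ) :=
  Function.LeftInverse.injective (g := fun x => fireRoot x γ) (fun x => fireRoot_fireRoot x hγ)

/-- The base obtained by reflecting in a simple root. -/
noncomputable def sBase (C : Base R) (γ : V) (hγ : γ ∈ C.S) : Base R where
  S := C.S.image (fun β => fireRoot β γ)
  subset := by
    intro a ha
    rw [Finset.coe_image] at ha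
    obtain ⟨β, hβ, rfl⟩ := ha
    exact R.reflect_mem γ (mem_root hγ) β (C.subset hβ)
  indep := by
    have hγ0 : γ ≠ 0 := root_ne_zero (mem_root hγ)
    have hker : LinearMap.ker (fireLM γ) = ⊥ := by
      rw [LinearMap.ker_eq_bot]
      exact fire_injective hγ0
    have hg : LinearIndependent ℝ (fun x : {a : V // a ∈ C.S} => fireLM γ (x : V)) :=
      C.indep.map' (fireLM γ) hker
    let e : {a : V // a ∈ C.S} ≃ {a : V // a ∈ C.S.image (fun β => fireRoot β γ)} :=
      { toFun := fun x => ⟨fireRoot (x : V) γ, Finset.mem_image_of_mem _ x.2⟩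
        invFun := fun y => ⟨fireRoot (y : V) γ, by
          obtain ⟨η, hη, hrw⟩ := Finset.mem_image.mp y.2
          rw [← hrw, fireRoot_fireRoot η hγ0]
          exact hη⟩
        left_inv := fun x => Subtype.ext (fireRoot_fireRoot (x : V) hγ0)
        right_inv := fun y => Subtype.ext (fireRoot_fireRoot (y : V) hγ0) }
    have : LinearIndependent ℝ
        (((↑) : {a : V // a ∈ C.S.image (fun β => fireRoot β γ)} → V) ∘ e) := hg
    exact (linearIndependent_equiv e).mp this
  decomp := by
    intro α hα
    have hγ0 : γ ≠ 0 := root_ne_zero (mem_root hγ)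
    have hTinj : ∀ x ∈ C.S, ∀ y ∈ C.S, fireRoot x γ = fireRoot y γ → x = y :=
      fun x _ y _ h => fire_injective hγ0 h
    have hTα : fireRoot α γ ∈ R.Δ := R.reflect_mem γ (mem_root hγ) α hα
    obtain ⟨c, hsum, hsign⟩ := C.decomp (fireRoot α γ) hTα
    refine ⟨fun v => c (fireRoot v γ), ?_, ?_⟩
    · rw [Finset.sum_image hTinj]
      have : ∀ β ∈ C.S, ((c (fireRoot (fireRoot β γ) γ) : ℤ) : ℝ) • fireRoot β γ
          = (c β : ℝ) • fireRoot β γ := by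
        intro β _
        rw [fireRoot_fireRoot β hγ0]
      rw [Finset.sum_congr rfl this]
      have hmap : ∑ β ∈ C.S, (c β : ℝ) • fireRoot β γ = fireRoot (fireRoot α γ) γ := by
        calc ∑ β ∈ C.S, (c β : ℝ) • fireRoot β γ
            = ∑ β ∈ C.S, fireLM γ ((c β : ℝ) • β) := by
              apply Finset.sum_congr rfl
              intro β _
              rw [map_smul, fireLM_apply]
          _ = fireLM γ (∑ β ∈ C.S, (c β : ℝ) • β) := (map_sum _ _ _).symm
          _ = fireRoot (fireRoot α γ) γ := by rw [← hsum, fireLM_apply]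
      rw [hmap, fireRoot_fireRoot α hγ0]
    · rcases hsign with h | h
      · left
        intro β hβ
        rw [Finset.mem_image] at hβ
        obtain ⟨η, hη, rfl⟩ := hβ
        show (0:ℤ) ≤ c (fireRoot (fireRoot η γ) γ)
        rw [fireRoot_fireRoot η hγ0]
        exact h η hη
      · right
        intro β hβ
        rw [Finset.mem_image] at hβ
        obtain ⟨η, hη, rfl⟩ := hβ
        show c (fireRoot (fireRoot η γ) γ) ≤ 0
        rw [fireRoot_fireRoot η hγ0]
        exact h η hη

lemma sBase_mem_iff (C : Base R) {γ : V} (hγ : γ ∈ C.S) (β : V) :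
    β ∈ (sBase C γ hγ).S ↔ ∃ η ∈ C.S, β = fireRoot η γ := by
  constructor
  · intro h
    rw [sBase, Finset.mem_image] at h
    obtain ⟨η, hη, rfl⟩ := h
    exact ⟨η, hη, rfl⟩
  · rintro ⟨η, hη, rfl⟩
    rw [sBase, Finset.mem_image]
    exact ⟨η, hη, rfl⟩

lemma fire_mem_sBase (C : Base R) {γ η : V} (hγ : γ ∈ C.S) (hη : η ∈ C.S) :
    fireRoot η γ ∈ (sBase C γ hγ).S := (sBase_mem_iff C hγ _).mpr ⟨η, hη, rfl⟩

/-- The ample condition applied to an adjacent pair of bases. -/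
lemma mu_sBase (P : AmplePolytope R) (C : Base R) {γ : V} (hγ : γ ∈ C.S) :
    ∃ r : ℤ, 1 ≤ r ∧ P.μ C - P.μ (sBase C γ hγ) = (r : ℝ) • γ := by
  obtain ⟨r, hr, heq⟩ := P.ample C (sBase C γ hγ) γ hγ (by
    intro β
    rw [sBase_mem_iff C hγ β]
    constructor
    · rintro ⟨η, hη, rfl⟩; exact ⟨η, hη, rfl⟩
    · rintro ⟨η, hη, rfl⟩; exact ⟨η, hη, rfl⟩)
  exact ⟨r, by omega, heq⟩

/-- Coordinates with respect to the reflected base. -/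
lemma cf_sBase (C : Base R) {γ η : V} (hγ : γ ∈ C.S) (hη : η ∈ C.S) (u : V) :
    cf (sBase C γ hγ) (fireRoot η γ) u = cf C η (fireRoot u γ) := by
  have hγ0 : γ ≠ 0 := root_ne_zero (mem_root hγ)
  have hTinj : ∀ x ∈ C.S, ∀ y ∈ C.S, fireRoot x γ = fireRoot y γ → x = y :=
    fun x _ y _ h => fire_injective hγ0 h
  set C' := sBase C γ hγ with hC'
  set d : V → ℝ := fun v => cf C (fireRoot v γ) (fireRoot u γ) with hd
  have hrepr : u = ∑ β ∈ C'.S, d β • β := by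
    have h1 : ∑ β ∈ C'.S, d β • β = ∑ β ∈ C.S, d (fireRoot β γ) • fireRoot β γ := by
      rw [hC', sBase]
      exact Finset.sum_image hTinj
    have h2 : ∀ β ∈ C.S, d (fireRoot β γ) • fireRoot β γ
        = fireLM γ (cf C β (fireRoot u γ) • β) := by
      intro β _
      rw [hd]
      simp only
      rw [fireRoot_fireRoot β hγ0, map_smul, fireLM_apply]
    rw [h1, Finset.sum_congr rfl h2, ← map_sum, sum_cf C (fireRoot u γ), fireLM_apply,
      fireRoot_fireRoot u hγ0]
  conv_lhs => rw [hrepr]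
  rw [cf_of_sum C' d (fire_mem_sBase C hγ hη), hd]
  simp only
  rw [fireRoot_fireRoot η hγ0]

lemma sum_cf_sBase (C : Base R) {γ : V} (hγ : γ ∈ C.S) (u : V) :
    ∑ β ∈ (sBase C γ hγ).S, cf (sBase C γ hγ) β u = ∑ η ∈ C.S, cf C η (fireRoot u γ) := by
  have hγ0 : γ ≠ 0 := root_ne_zero (mem_root hγ)
  have hTinj : ∀ x ∈ C.S, ∀ y ∈ C.S, fireRoot x γ = fireRoot y γ → x = y :=
    fun x _ y _ h => fire_injective hγ0 h
  rw [show (sBase C γ hγ).S = C.S.image (fun β => fireRoot β γ) from rfl,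
    Finset.sum_image hTinj]
  apply Finset.sum_congr rfl
  intro η hη
  exact cf_sBase C hγ hη u

end Stmt19
namespace Stmt19

variable {V : Type*} [NormedAddCommGroup V] [InnerProductSpace ℝ V] {R : RootSystemData V}

local notation "⟪" x ", " y "⟫" => @inner ℝ _ _ x y

attribute [local instance] Classical.propDecidable

lemma lm_expand (f : V →ₗ[ℝ] ℝ) (C : Base R) (u : V) :
    f u = ∑ γ ∈ C.S, cf C γ u * f γ := by
  conv_lhs => rw [← sum_cf C u]
  rw [map_sum]
  exact Finset.sum_congr rfl fun γ _ => by rw [map_smul, smul_eq_mul]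

lemma exists_max_base (P : AmplePolytope R) (f : V →ₗ[ℝ] ℝ) (C0 : Base R) :
    ∃ Bm : Base R, ∀ C : Base R, f (P.μ C) ≤ f (P.μ Bm) := by
  haveI := baseFinite R
  haveI : Nonempty (Base R) := ⟨C0⟩
  exact Finite.exists_max fun C => f (P.μ C)

lemma max_dominant (P : AmplePolytope R) (f : V →ₗ[ℝ] ℝ) {Bm : Base R}
    (hmax : ∀ C : Base R, f (P.μ C) ≤ f (P.μ Bm)) {γ : V} (hγ : γ ∈ Bm.S) :
    0 ≤ f γ := by
  obtain ⟨r, hr, heq⟩ := mu_sBase P Bm hγ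
  have h1 : f (P.μ Bm) - f (P.μ (sBase Bm γ hγ)) = (r : ℝ) * f γ := by
    rw [← map_sub, heq, map_smul, smul_eq_mul]
  have h2 := hmax (sBase Bm γ hγ)
  have hrpos : (0:ℝ) < (r : ℝ) := by exact_mod_cast (by omega : (0:ℤ) < r)
  nlinarith

lemma strict_posR (C : Base R) (f : V →ₗ[ℝ] ℝ) (hf : ∀ γ ∈ C.S, 0 < f γ)
    {β : V} (hpos : PosR C β) : 0 < f β := by
  obtain ⟨hβ, hcoord⟩ := hpos
  rw [lm_expand f C β]
  have hβ0 : β ≠ 0 := root_ne_zero hβ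
  have hex : ∃ γ ∈ C.S, 0 < cf C γ β := by
    by_contra hcon
    push_neg at hcon
    apply hβ0
    rw [← sum_cf C β]
    apply Finset.sum_eq_zero
    intro γ hγ
    have : cf C γ β = 0 := le_antisymm (hcon γ hγ) (hcoord γ hγ)
    rw [this, zero_smul]
  obtain ⟨γ0, hγ0, hc0⟩ := hex
  apply Finset.sum_pos'
  · intro γ hγ
    exact mul_nonneg (hcoord γ hγ) (hf γ hγ).le
  · exact ⟨γ0, hγ0, mul_pos hc0 (hf γ0 hγ0)⟩

lemma posR_iff_strict (C : Base R) (f : V →ₗ[ℝ] ℝ) (hf : ∀ γ ∈ C.S, 0 < f γ)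
    {β : V} (hβ : β ∈ R.Δ) : PosR C β ↔ 0 < f β := by
  constructor
  · exact strict_posR C f hf
  · intro h
    rcases posR_or C hβ with hp | hp
    · exact hp
    · exfalso
      have := strict_posR C f hf hp
      rw [map_neg] at this
      linarith

lemma simple_posR {C : Base R} {γ : V} (hγ : γ ∈ C.S) : PosR C γ :=
  isPos_posR (simple_isPos hγ)

lemma strict_subset (f : V →ₗ[ℝ] ℝ) (C C' : Base R)
    (hC : ∀ γ ∈ C.S, 0 < f γ) (hC' : ∀ γ ∈ C'.S, 0 < f γ) : C'.S ⊆ C.S := by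
  intro γ' hγ'
  have hγ'Δ : γ' ∈ R.Δ := mem_root hγ'
  have hγ'0 : γ' ≠ 0 := root_ne_zero hγ'Δ
  -- γ' is positive for C
  have hposC : PosR C γ' :=
    (posR_iff_strict C f hC hγ'Δ).mpr (strict_posR C' f hC' (simple_posR hγ'))
  obtain ⟨_, n, hn⟩ := hposC.isPos
  -- each η ∈ C.S is positive for C'
  have hm : ∀ η ∈ C.S, ∃ m : V → ℕ, η = ∑ ξ ∈ C'.S, (m ξ : ℝ) • ξ := by
    intro η hη
    have : PosR C' η :=
      (posR_iff_strict C' f hC' (mem_root hη)).mpr (strict_posR C f hC (simple_posR hη))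
    obtain ⟨_, m, hm⟩ := this.isPos
    exact ⟨m, hm⟩
  choose m hmeq using hm
  -- double sum expansion
  have hdouble : γ' = ∑ ξ ∈ C'.S, ((∑ η ∈ C.S.attach, n η.1 * m η.1 η.2 ξ : ℕ) : ℝ) • ξ := by
    calc γ' = ∑ η ∈ C.S, (n η : ℝ) • η := hn
      _ = ∑ η ∈ C.S.attach, (n η.1 : ℝ) • (η.1 : V) := (Finset.sum_attach _ _).symm
      _ = ∑ η ∈ C.S.attach, (n η.1 : ℝ) • (∑ ξ ∈ C'.S, (m η.1 η.2 ξ : ℝ) • ξ) := by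
          apply Finset.sum_congr rfl
          intro η _
          rw [← hmeq η.1 η.2]
      _ = ∑ η ∈ C.S.attach, ∑ ξ ∈ C'.S, ((n η.1 * m η.1 η.2 ξ : ℕ) : ℝ) • ξ := by
          apply Finset.sum_congr rfl
          intro η _
          rw [Finset.smul_sum]
          apply Finset.sum_congr rfl
          intro ξ _
          rw [smul_smul]
          push_cast
          ring_nf
      _ = ∑ ξ ∈ C'.S, ∑ η ∈ C.S.attach, ((n η.1 * m η.1 η.2 ξ : ℕ) : ℝ) • ξ :=
          Finset.sum_comm
      _ = ∑ ξ ∈ C'.S, ((∑ η ∈ C.S.attach, n η.1 * m η.1 η.2 ξ : ℕ) : ℝ) • ξ := by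
          apply Finset.sum_congr rfl
          intro ξ _
          rw [← Finset.sum_smul]
          push_cast
          ring_nf
  -- apply coordinate functionals of C'
  set K : V → ℕ := fun ξ0 => ∑ η ∈ C.S.attach, n η.1 * m η.1 η.2 ξ0 with hK
  have hKeval : ∀ ξ0 ∈ C'.S, (K ξ0 : ℝ) = cf C' ξ0 γ' := by
    intro ξ0 hξ0
    conv_rhs => rw [hdouble]
    rw [cf_of_sum C' (fun ξ => ((K ξ : ℕ) : ℝ)) hξ0]
  -- ∑_{ξ ∈ C'.S} K ξ = 1
  have hsum1 : ∑ ξ ∈ C'.S, K ξ = 1 := by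
    have hreal : ((∑ ξ ∈ C'.S, K ξ : ℕ) : ℝ) = 1 := by
      push_cast
      rw [Finset.sum_congr rfl hKeval]
      rw [Finset.sum_eq_single γ']
      · exact cf_basis_self C' hγ'
      · intro ξ hξ hne
        exact cf_basis_ne C' hξ hγ' (Ne.symm hne)
      · intro h; exact absurd hγ' h
    exact_mod_cast hreal
  -- M η ≥ 1 for each η
  have hM : ∀ η : {a : V // a ∈ C.S}, 1 ≤ ∑ ξ ∈ C'.S, m η.1 η.2 ξ := by
    intro η
    by_contra hcon
    push_neg at hcon
    have hz : ∑ ξ ∈ C'.S, m η.1 η.2 ξ = 0 := by omega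
    have : (η.1 : V) = 0 := by
      rw [hmeq η.1 η.2]
      apply Finset.sum_eq_zero
      intro ξ hξ
      have : m η.1 η.2 ξ = 0 := by
        have := (Finset.sum_eq_zero_iff).mp hz ξ hξ
        omega
      rw [this]
      simp
    exact root_ne_zero (mem_root η.2) this
  -- hence ∑ n η ≤ 1 after reorganizing
  have hswap : ∑ ξ ∈ C'.S, K ξ = ∑ η ∈ C.S.attach, n η.1 * (∑ ξ ∈ C'.S, m η.1 η.2 ξ) := by
    rw [hK]
    simp only
    rw [Finset.sum_comm]
    apply Finset.sum_congr rfl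
    intro η _
    rw [Finset.mul_sum]
  have hnle : ∑ η ∈ C.S.attach, n η.1 ≤ 1 := by
    rw [← hsum1, hswap]
    apply Finset.sum_le_sum
    intro η _
    calc n η.1 = n η.1 * 1 := (mul_one _).symm
      _ ≤ n η.1 * (∑ ξ ∈ C'.S, m η.1 η.2 ξ) := Nat.mul_le_mul_left _ (hM η)
  have hnge : 1 ≤ ∑ η ∈ C.S.attach, n η.1 := by
    by_contra hcon
    push_neg at hcon
    have hz : ∑ η ∈ C.S.attach, n η.1 = 0 := by omega
    apply hγ'0
    rw [hn, ← Finset.sum_attach C.S (fun η => (n η : ℝ) • η)]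
    apply Finset.sum_eq_zero
    intro η hη
    have : n η.1 = 0 := by
      have := (Finset.sum_eq_zero_iff).mp hz η (Finset.mem_attach _ _)
      omega
    rw [this]
    simp
  have hsumn : ∑ η ∈ C.S.attach, n η.1 = 1 := le_antisymm hnle hnge
  -- extract the unique η₀
  obtain ⟨η0, hη0mem, hη0ne⟩ : ∃ η0 ∈ C.S.attach, n η0.1 ≠ 0 := by
    by_contra hcon
    push_neg at hcon
    rw [Finset.sum_eq_zero (fun η hη => hcon η hη)] at hsumn
    omega
  have h1 : n η0.1 + ∑ ηx ∈ C.S.attach.erase η0, n ηx.1 = 1 := by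
    have := Finset.add_sum_erase C.S.attach (fun η => n η.1) hη0mem
    rw [hsumn] at this
    exact this
  have hη0ge : 1 ≤ n η0.1 := by omega
  have hzero : ∑ ηx ∈ C.S.attach.erase η0, n ηx.1 = 0 := by omega
  have hothers : ∀ η ∈ C.S.attach, η ≠ η0 → n η.1 = 0 := by
    intro η hη hne
    exact (Finset.sum_eq_zero_iff).mp hzero η (Finset.mem_erase.mpr ⟨hne, hη⟩)
  have hn0 : n η0.1 = 1 := by omega
  -- conclude γ' = η0 ∈ C.S
  have : γ' = (η0.1 : V) := by
    rw [hn, ← Finset.sum_attach C.S (fun η => (n η : ℝ) • η)]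
    rw [Finset.sum_eq_single η0]
    · rw [hn0]; simp
    · intro η hη hne
      rw [hothers η hη hne]; simp
    · intro h; exact absurd hη0mem h
  rw [this]
  exact η0.2

lemma strict_unique (f : V →ₗ[ℝ] ℝ) (C C' : Base R)
    (hC : ∀ γ ∈ C.S, 0 < f γ) (hC' : ∀ γ ∈ C'.S, 0 < f γ) : C = C' :=
  Base.ext' (Finset.Subset.antisymm (strict_subset f C' C hC' hC)
    (strict_subset f C C' hC hC'))

/-- The height functional of a base. -/
noncomputable def htf (C : Base R) : V →ₗ[ℝ] ℝ := ∑ γ ∈ C.S, cf C γ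

lemma htf_apply (C : Base R) (u : V) : htf C u = ∑ γ ∈ C.S, cf C γ u := by
  rw [htf]
  simp [LinearMap.sum_apply]

lemma htf_simple (C : Base R) {γ : V} (hγ : γ ∈ C.S) : htf C γ = 1 := by
  rw [htf_apply]
  rw [Finset.sum_eq_single γ]
  · exact cf_basis_self C hγ
  · intro η hη hne
    exact cf_basis_ne C hη hγ (Ne.symm hne)
  · intro h; exact absurd hγ h

lemma htf_posR {C : Base R} {β : V} (h : PosR C β) : 1 ≤ htf C β := by
  obtain ⟨hβ, hcoord⟩ := h
  have hint : IsInt (htf C β) := by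
    rw [htf_apply]
    exact IsInt.sum _ _ fun γ hγ => cf_root_int C hγ hβ
  apply hint.one_le
  rw [htf_apply]
  apply Finset.sum_pos'
  · exact hcoord
  · by_contra hcon
    push_neg at hcon
    apply root_ne_zero hβ
    rw [← sum_cf C β]
    apply Finset.sum_eq_zero
    intro γ hγ
    have : cf C γ β = 0 := le_antisymm (hcon γ hγ) (hcoord γ hγ)
    rw [this, zero_smul]

lemma htf_root_ne {C : Base R} {β : V} (hβ : β ∈ R.Δ) : htf C β ≠ 0 := by
  rcases posR_or C hβ with h | h
  · have := htf_posR h; linarith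
  · have := htf_posR h; rw [map_neg] at this; linarith

/-- KEY: a vertex of the chamber dominating `f` maximizes `f` among all vertices. -/
lemma key (P : AmplePolytope R) (f : V →ₗ[ℝ] ℝ) (C : Base R)
    (hf : ∀ γ ∈ C.S, 0 ≤ f γ) (C'' : Base R) : f (P.μ C'') ≤ f (P.μ C) := by
  by_contra hcon
  push_neg at hcon
  set d : ℝ := f (P.μ C'') - f (P.μ C) with hd
  have hdpos : 0 < d := by rw [hd]; linarith
  set g : V →ₗ[ℝ] ℝ := htf C with hg
  set A : ℝ := |g (P.μ C)| + |g (P.μ C'')| with hA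
  have hApos : 0 < A + 1 := by positivity
  set b : ℝ := min 1 (d / (A + 1)) with hb
  have hbpos : 0 < b := lt_min one_pos (div_pos hdpos hApos)
  set Bad : Set ℝ := (fun β => -(f β) / (g β)) '' R.Δ with hBad
  have hBadFin : Bad.Finite := R.finite.image _
  have : ((Set.Ioo (0:ℝ) b) \ Bad).Nonempty := by
    apply Set.Infinite.nonempty
    apply Set.Infinite.diff _ hBadFin
    exact Set.infinite_coe_iff.mp (Set.Ioo.infinite hbpos)
  obtain ⟨ε, hεIoo, hεBad⟩ := this
  obtain ⟨hε0, hεb⟩ := hεIoo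
  set F : V →ₗ[ℝ] ℝ := f + ε • g with hF
  have hFapp : ∀ v, F v = f v + ε * g v := by
    intro v
    rw [hF]
    simp
  -- F is strictly dominant at C
  have hFC : ∀ γ ∈ C.S, 0 < F γ := by
    intro γ hγ
    rw [hFapp, hg, htf_simple C hγ, mul_one]
    have := hf γ hγ
    linarith
  -- F is nonzero on all roots
  have hFroot : ∀ β ∈ R.Δ, F β ≠ 0 := by
    intro β hβ hzero
    apply hεBad
    rw [hBad]
    refine ⟨β, hβ, ?_⟩
    rw [hFapp] at hzero
    have hgne : g β ≠ 0 := htf_root_ne hβ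
    field_simp
    linarith
  -- maximizer of F
  obtain ⟨Bm, hBm⟩ := exists_max_base P F C
  have hFBm : ∀ γ ∈ Bm.S, 0 < F γ := by
    intro γ hγ
    have h1 := max_dominant P F hBm hγ
    have h2 := hFroot γ (mem_root hγ)
    rcases lt_or_eq_of_le h1 with h | h
    · exact h
    · exact absurd h.symm h2
  have hBmC : C = Bm := strict_unique F C Bm hFC hFBm
  have hineq := hBm C''
  rw [← hBmC] at hineq
  rw [hFapp, hFapp] at hineq
  -- derive contradiction
  have h1 : d ≤ ε * (g (P.μ C) - g (P.μ C'')) := by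
    rw [hd]; linarith
  have h2 : g (P.μ C) - g (P.μ C'') ≤ A := by
    rw [hA]
    have := le_abs_self (g (P.μ C))
    have := neg_abs_le (g (P.μ C''))
    linarith
  have h3 : ε * (g (P.μ C) - g (P.μ C'')) ≤ ε * A := by
    apply mul_le_mul_of_nonneg_left h2 hε0.le
  have h4 : ε * A < d := by
    have hεd : ε < d / (A + 1) := lt_of_lt_of_le hεb (min_le_right _ _)
    have hA0 : 0 ≤ A := by rw [hA]; positivity
    calc ε * A ≤ ε * (A + 1) := by nlinarith
      _ < (d / (A + 1)) * (A + 1) := by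
          apply mul_lt_mul_of_pos_right hεd hApos
      _ = d := by field_simp
  linarith

/-- If `x` lies in the polytope, then `μ_C - x` has nonnegative coordinates at every base. -/
lemma carrier_coords (P : AmplePolytope R) {x : V} (hx : x ∈ P.carrier)
    (C : Base R) {γ : V} (hγ : γ ∈ C.S) : 0 ≤ cf C γ (P.μ C - x) := by
  have hdom : ∀ η ∈ C.S, 0 ≤ cf C γ η := by
    intro η hη
    by_cases h : η = γ
    · subst h; rw [cf_basis_self C hγ]; norm_num
    · rw [cf_basis_ne C hγ hη h]
  have hkey := key P (cf C γ) C hdom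
  have hhalf : P.carrier ⊆ {v | cf C γ v ≤ cf C γ (P.μ C)} := by
    apply convexHull_min
    · rintro v ⟨C'', rfl⟩
      exact hkey C''
    · exact convex_halfSpace_le (LinearMap.isLinear _) _
  have := hhalf hx
  rw [map_sub]
  simp only [Set.mem_setOf_eq] at this
  linarith

/-- Conversely, nonnegative coordinates at every base imply membership in the polytope. -/
lemma coords_carrier (P : AmplePolytope R) {y : V}
    (h : ∀ C : Base R, ∀ γ ∈ C.S, 0 ≤ cf C γ (P.μ C - y)) (C0 : Base R) :
    y ∈ P.carrier := by
  haveI := baseFinite R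
  by_contra hy
  have hconv : Convex ℝ P.carrier := convex_convexHull ℝ _
  have hclosed : IsClosed P.carrier :=
    ((Set.finite_range P.μ).isCompact_convexHull (𝕜 := ℝ)).isClosed
  obtain ⟨f, u, hfa, hfy⟩ := geometric_hahn_banach_closed_point hconv hclosed hy
  obtain ⟨Bm, hBm⟩ := exists_max_base P f.toLinearMap C0
  have hdom : ∀ γ ∈ Bm.S, 0 ≤ f.toLinearMap γ := fun γ hγ => max_dominant P _ hBm hγ
  have hpos : 0 ≤ f.toLinearMap (P.μ Bm - y) := by
    rw [lm_expand f.toLinearMap Bm]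
    apply Finset.sum_nonneg
    intro γ hγ
    exact mul_nonneg (h Bm γ hγ) (hdom γ hγ)
  have hmem : P.μ Bm ∈ P.carrier := subset_convexHull ℝ _ ⟨Bm, rfl⟩
  have h1 := hfa _ hmem
  have h2 : f.toLinearMap (P.μ Bm - y) = f (P.μ Bm) - f y := by
    rw [map_sub]; rfl
  rw [h2] at hpos
  linarith

end Stmt19
namespace Stmt19

variable {V : Type*} [NormedAddCommGroup V] [InnerProductSpace ℝ V] {R : RootSystemData V}

local notation "⟪" x ", " y "⟫" => @inner ℝ _ _ x y

attribute [local instance] Classical.propDecidable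

lemma sum_cf_simple (C : Base R) {γ : V} (hγ : γ ∈ C.S) :
    ∑ η ∈ C.S, cf C η γ = 1 := by
  rw [← htf_apply]
  exact htf_simple C hγ

lemma cf_fire (C : Base R) (η δ γ0 : V) :
    cf C η (fireRoot δ γ0) = cf C η δ - pairing δ γ0 * cf C η γ0 := by
  rw [fireRoot, map_sub, map_smul, smul_eq_mul]

lemma pairing_obtuse (C : Base R) {η γ : V} (hη : η ∈ C.S) (hγ : γ ∈ C.S)
    (hne : η ≠ γ) : pairing η γ ≤ 0 :=
  (pairing_nonpos_iff (root_ne_zero (mem_root hγ))).mpr (obtuse C hη hγ hne)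

/-- Descent across the wall of `γ0`: all coordinates of `μ_C - x - δ` other
than the `γ0`-coordinate are nonnegative, assuming the inductive hypothesis. -/
lemma cross_lemma (P : AmplePolytope R) (x : V) (n : ℕ)
    (IH : ∀ C : Base R, ∀ δ : V, δ ∈ R.Δ → (∀ γ ∈ C.S, 0 ≤ cf C γ δ) →
      (∑ γ ∈ C.S, cf C γ δ) ≤ (n : ℝ) → pairing x δ ≤ -1 →
      ∀ γ ∈ C.S, 0 ≤ cf C γ (P.μ C - x - δ))
    (C : Base R) (δ : V) (hδ : δ ∈ R.Δ) (hcoords : ∀ γ ∈ C.S, 0 ≤ cf C γ δ)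
    (hsum : (∑ γ ∈ C.S, cf C γ δ) ≤ (n : ℝ) + 1) (hpx : pairing x δ ≤ -1)
    (hδS : δ ∉ C.S) {γ0 : V} (hγ0 : γ0 ∈ C.S) (hip : 0 < ⟪δ, γ0⟫) :
    ∀ η ∈ C.S, η ≠ γ0 → 0 ≤ cf C η (P.μ C - x - δ) := by
  have hγ0Δ : γ0 ∈ R.Δ := mem_root hγ0
  have hγ00 : γ0 ≠ 0 := root_ne_zero hγ0Δ
  have hδ0 : δ ≠ 0 := root_ne_zero hδ
  have hq1 : 1 ≤ pairing δ γ0 :=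
    IsInt.one_le (R.crystallographic δ hδ γ0 hγ0Δ) ((pairing_pos_iff hγ00).mpr hip)
  -- fireRoot δ γ0 has nonnegative coordinates
  have hTδΔ : fireRoot δ γ0 ∈ R.Δ := R.reflect_mem γ0 hγ0Δ δ hδ
  have hδneγ0 : δ ≠ γ0 := fun h => hδS (h ▸ hγ0)
  obtain ⟨η1, hη1, hη1ne, hη1pos⟩ := exists_other_coord C hδ hcoords hγ0 hδneγ0
  have hTδcoords : ∀ η ∈ C.S, 0 ≤ cf C η (fireRoot δ γ0) := by
    rcases root_dichotomy C hTδΔ with h | h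
    · exact h
    · exfalso
      have := h η1 hη1
      rw [cf_fire, cf_basis_ne C hη1 hγ0 (Ne.symm hη1ne), mul_zero, sub_zero] at this
      linarith
  -- the reflected base
  set C' := sBase C γ0 hγ0 with hC'
  have hIH' : ∀ β' ∈ C'.S, 0 ≤ cf C' β' (P.μ C' - x - δ) := by
    apply IH C' δ hδ
    · intro β' hβ'
      obtain ⟨η, hη, rfl⟩ := (sBase_mem_iff C hγ0 β').mp hβ'
      rw [cf_sBase C hγ0 hη]
      exact hTδcoords η hη
    · rw [sum_cf_sBase C hγ0 δ]
      have hexp : ∀ η ∈ C.S, cf C η (fireRoot δ γ0)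
          = cf C η δ - pairing δ γ0 * cf C η γ0 := fun η _ => cf_fire C η δ γ0
      rw [Finset.sum_congr rfl hexp, Finset.sum_sub_distrib, ← Finset.mul_sum,
        sum_cf_simple C hγ0, mul_one]
      linarith
    · exact hpx
  -- transfer back
  intro η hη hηne
  obtain ⟨r, hr, heq⟩ := mu_sBase P C hγ0
  have hμC' : P.μ C' = P.μ C - (r : ℝ) • γ0 := by
    rw [← heq]; abel
  have h0 := hIH' (fireRoot η γ0) (fire_mem_sBase C hγ0 hη)
  rw [cf_sBase C hγ0 hη] at h0
  have hw : fireRoot (P.μ C' - x - δ) γ0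
      = fireRoot (P.μ C - x - δ) γ0 + (r : ℝ) • γ0 := by
    rw [hμC']
    rw [show P.μ C - (r:ℝ) • γ0 - x - δ = (P.μ C - x - δ) - (r:ℝ) • γ0 by abel]
    rw [fireRoot_sub, fireRoot_smul, fireRoot_self hγ00, smul_neg]
    abel
  rw [hw, map_add, map_smul, smul_eq_mul] at h0
  rw [cf_fire, cf_basis_ne C hη hγ0 (Ne.symm hηne), mul_zero, sub_zero, mul_zero,
    add_zero] at h0
  exact h0

end Stmt19
namespace Stmt19

variable {V : Type*} [NormedAddCommGroup V] [InnerProductSpace ℝ V] {R : RootSystemData V}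

local notation "⟪" x ", " y "⟫" => @inner ℝ _ _ x y

attribute [local instance] Classical.propDecidable

/-- MAIN LEMMA: if `x` lies in the special ample polytope `P` (in the coset of the root
lattice), `δ` is a root which is positive w.r.t. `C`, and `⟨x, δ^∨⟩ ≤ -1`, then
`μ_C - x - δ` still has nonnegative coordinates w.r.t. `C`. -/
lemma main_lemma (P : AmplePolytope R) (hPs : IsSpecial P) (x : V)
    (hx1 : ∀ C : Base R, ∀ γ ∈ C.S, 0 ≤ cf C γ (P.μ C - x))
    (hx2 : ∀ C : Base R, x - P.μ C ∈ rootLattice R) :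
    ∀ n : ℕ, ∀ C : Base R, ∀ δ : V, δ ∈ R.Δ → (∀ γ ∈ C.S, 0 ≤ cf C γ δ) →
      (∑ γ ∈ C.S, cf C γ δ) ≤ (n : ℝ) → pairing x δ ≤ -1 →
      ∀ γ ∈ C.S, 0 ≤ cf C γ (P.μ C - x - δ) := by
  have hint_mu_x : ∀ (C1 : Base R), ∀ {γ1 : V}, γ1 ∈ C1.S → IsInt (cf C1 γ1 (P.μ C1 - x)) := by
    intro C1 γ1 hγ1
    have h := (cf_lattice_int C1 hγ1 (hx2 C1)).neg
    rwa [← map_neg, neg_sub] at h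
  intro n
  induction n with
  | zero =>
    intro C δ hδ hcoords hsum hpx γ hγ
    exfalso
    apply root_ne_zero hδ
    rw [← sum_cf C δ]
    apply Finset.sum_eq_zero
    intro η hη
    have h1 : cf C η δ = 0 := by
      have hle : ∑ γ ∈ C.S, cf C γ δ ≤ 0 := by exact_mod_cast hsum
      have := Finset.sum_nonneg hcoords
      have hz : ∑ γ ∈ C.S, cf C γ δ = 0 := le_antisymm hle this
      have := (Finset.sum_eq_zero_iff_of_nonneg hcoords).mp hz η hη
      exact this
    rw [h1, zero_smul]
  | succ n IH =>
    intro C δ hδ hcoords hsum hpx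
    have hδ0 : δ ≠ 0 := root_ne_zero hδ
    have hDpos : (0:ℝ) < ⟪δ, δ⟫ := inner_self_pos' hδ0
    by_cases hδS : δ ∈ C.S
    · -- base case: δ is simple
      intro γ hγ
      rw [show P.μ C - x - δ = (P.μ C - x) - δ by abel, map_sub]
      by_cases hγδ : γ = δ
      · subst hγδ
        rw [cf_basis_self C hγ]
        have hint := hint_mu_x C hγ
        have hexp : pairing (P.μ C - x) γ = ∑ η ∈ C.S, cf C η (P.μ C - x) * pairing η γ :=
          pairing_expand C _ γ
        have hsplit : cf C γ (P.μ C - x) * pairing γ γ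
            + ∑ η ∈ C.S.erase γ, cf C η (P.μ C - x) * pairing η γ
            = ∑ η ∈ C.S, cf C η (P.μ C - x) * pairing η γ :=
          Finset.add_sum_erase C.S (fun η => cf C η (P.μ C - x) * pairing η γ) hγ
        have herase : ∑ η ∈ C.S.erase γ, cf C η (P.μ C - x) * pairing η γ ≤ 0 := by
          apply Finset.sum_nonpos
          intro η hη
          have hη' := Finset.mem_of_mem_erase hη
          have hηγ := Finset.ne_of_mem_erase hη
          exact mul_nonpos_of_nonneg_of_nonpos (hx1 C η hη') (pairing_obtuse C hη' hγ hηγ)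
        have hself : pairing γ γ = 2 := pairing_self (root_ne_zero (mem_root hγ))
        have hlow : 1 ≤ pairing (P.μ C - x) γ := by
          rw [pairing_sub_left]
          have h1 := hPs C γ hγ
          linarith
        have h2 : 1 ≤ 2 * cf C γ (P.μ C - x) := by
          rw [hexp, ← hsplit, hself] at hlow
          nlinarith [herase]
        have := hint.one_le_of_two_le_two_mul h2
        linarith
      · rw [cf_basis_ne C hγ hδS (fun h => hγδ h.symm)]
        have := hx1 C γ hγ
        linarith
    · -- inductive step: δ is not simple
      -- find the distinguished wall γ0
      have hex : ∃ γ0 ∈ C.S, 0 < cf C γ0 δ * ⟪δ, γ0⟫ := by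
        by_contra hcon
        push_neg at hcon
        have : ⟪δ, δ⟫ ≤ 0 := by
          rw [inner_expand C δ δ]
          exact Finset.sum_nonpos fun η hη => hcon η hη
        linarith
      obtain ⟨γ0, hγ0, hterm⟩ := hex
      have hip0 : 0 < ⟪δ, γ0⟫ := by
        rcases mul_pos_iff.mp hterm with ⟨_, h⟩ | ⟨h, _⟩
        · exact h
        · exfalso; linarith [hcoords γ0 hγ0]
      have hcf0 : 0 < cf C γ0 δ := by
        rcases mul_pos_iff.mp hterm with ⟨h, _⟩ | ⟨_, h⟩
        · exact h
        · exfalso; linarith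
      have hsum' : (∑ γ ∈ C.S, cf C γ δ) ≤ (n : ℝ) + 1 := by
        push_cast at hsum
        linarith
      intro γ hγ
      by_cases hcase : γ = γ0
      swap
      · exact cross_lemma P x n IH C δ hδ hcoords hsum' hpx hδS hγ0 hip0 γ hγ hcase
      rw [hcase]
      clear hγ hcase
      -- now γ = γ0; check whether there is a second wall
      by_cases hsec : ∃ γ1 ∈ C.S, γ1 ≠ γ0 ∧ 0 < ⟪δ, γ1⟫
      · obtain ⟨γ1, hγ1, hγ1ne, hγ1ip⟩ := hsec
        exact cross_lemma P x n IH C δ hδ hcoords hsum' hpx hδS hγ1 hγ1ip γ0 hγ0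
          (Ne.symm hγ1ne)
      push_neg at hsec
      -- singleton case: ∀ η ≠ γ0, ⟪δ, η⟫ ≤ 0
      by_contra hbad
      push_neg at hbad
      set v : V := P.μ C - x - δ with hv
      set c0 : ℝ := cf C γ0 v with hc0
      have hγ0Δ : γ0 ∈ R.Δ := mem_root hγ0
      have hγ00 : γ0 ≠ 0 := root_ne_zero hγ0Δ
      have hGpos : (0:ℝ) < ⟪γ0, γ0⟫ := inner_self_pos' hγ00
      have hδneγ0 : δ ≠ γ0 := fun h => hδS (h ▸ hγ0)
      have hslots : ∀ η ∈ C.S, η ≠ γ0 → 0 ≤ cf C η v :=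
        cross_lemma P x n IH C δ hδ hcoords hsum' hpx hδS hγ0 hip0
      have hvint : IsInt c0 := by
        rw [hc0, hv, show P.μ C - x - δ = (P.μ C - x) - δ by abel, map_sub]
        exact (hint_mu_x C hγ0).sub (cf_root_int C hγ0 hδ)
      have hc0le : c0 ≤ -1 := hvint.le_neg_one hbad
      -- pairing of v with γ0
      have hvγ0 : pairing v γ0 ≤ 2 * c0 := by
        have hsplit : cf C γ0 v * pairing γ0 γ0
            + ∑ η ∈ C.S.erase γ0, cf C η v * pairing η γ0
            = ∑ η ∈ C.S, cf C η v * pairing η γ0 :=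
          Finset.add_sum_erase C.S (fun η => cf C η v * pairing η γ0) hγ0
        rw [pairing_expand C v γ0, ← hsplit, pairing_self hγ00]
        have : ∑ η ∈ C.S.erase γ0, cf C η v * pairing η γ0 ≤ 0 := by
          apply Finset.sum_nonpos
          intro η hη
          exact mul_nonpos_of_nonneg_of_nonpos
            (hslots η (Finset.mem_of_mem_erase hη) (Finset.ne_of_mem_erase hη))
            (pairing_obtuse C (Finset.mem_of_mem_erase hη) hγ0 (Finset.ne_of_mem_erase hη))
        rw [← hc0]
        linarith
      have hvdecγ0 : pairing v γ0 = pairing (P.μ C) γ0 - pairing x γ0 - pairing δ γ0 := by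
        rw [hv, pairing_sub_left, pairing_sub_left]
      have hμγ0p : 0 ≤ pairing (P.μ C) γ0 := hPs C γ0 hγ0
      -- q' and p'
      have hq1 : 1 ≤ pairing δ γ0 :=
        IsInt.one_le (R.crystallographic δ hδ γ0 hγ0Δ) ((pairing_pos_iff hγ00).mpr hip0)
      have hp1 : 1 ≤ pairing γ0 δ :=
        IsInt.one_le (R.crystallographic γ0 hγ0Δ δ hδ)
          ((pairing_pos_iff hδ0).mpr (by rw [real_inner_comm]; exact hip0))
      -- pairing of v with δ
      have hobδ : ∀ η ∈ C.S, η ≠ γ0 → pairing η δ ≤ 0 := by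
        intro η hη hne
        apply (pairing_nonpos_iff hδ0).mpr
        rw [real_inner_comm]
        exact hsec η hη hne
      set E : ℝ := ∑ η ∈ C.S.erase γ0, cf C η v * pairing η δ with hE
      have hEle : E ≤ 0 := by
        apply Finset.sum_nonpos
        intro η hη
        exact mul_nonpos_of_nonneg_of_nonpos
          (hslots η (Finset.mem_of_mem_erase hη) (Finset.ne_of_mem_erase hη))
          (hobδ η (Finset.mem_of_mem_erase hη) (Finset.ne_of_mem_erase hη))
      have hvδ1 : pairing v δ = c0 * pairing γ0 δ + E := by
        have hsplit : cf C γ0 v * pairing γ0 δ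
            + ∑ η ∈ C.S.erase γ0, cf C η v * pairing η δ
            = ∑ η ∈ C.S, cf C η v * pairing η δ :=
          Finset.add_sum_erase C.S (fun η => cf C η v * pairing η δ) hγ0
        rw [pairing_expand C v δ, ← hsplit]
      have hvδ2 : pairing v δ = pairing (P.μ C) δ - pairing x δ - 2 := by
        rw [hv, pairing_sub_left, pairing_sub_left, pairing_self hδ0]
      have hμδ : 0 ≤ pairing (P.μ C) δ := by
        apply (pairing_nonneg_iff hδ0).mpr
        exact dominant_inner_nonneg C (fun η hη => hPs C η hη) hcoords
      -- pin down the configuration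
      have hsp : 1 ≤ (-c0) * pairing γ0 δ := by nlinarith
      have hprod : (-c0) * pairing γ0 δ = -(c0 * pairing γ0 δ) := by ring
      have hpin : (-(pairing x δ) - 1) + ((-c0) * pairing γ0 δ - 1) + (-E)
          + pairing (P.μ C) δ = 0 := by
        rw [hprod]
        linarith [hvδ1, hvδ2]
      have hxδ1 : pairing x δ = -1 := by linarith [hsp, hEle, hμδ]
      have hspeq : (-c0) * pairing γ0 δ = 1 := by linarith [hsp, hEle, hμδ]
      have hμδ0 : pairing (P.μ C) δ = 0 := by linarith [hsp, hEle, hμδ]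
      have hc0eq : c0 = -1 := by nlinarith
      have hp'1 : pairing γ0 δ = 1 := by
        rw [hc0eq] at hspeq
        linarith
      -- μ is orthogonal to the support of δ
      have hμδinner : ⟪P.μ C, δ⟫ = 0 := by
        have h := hμδ0
        rw [pairing_def] at h
        rcases div_eq_zero_iff.mp h with h' | h'
        · linarith
        · linarith
      have hμsupp : ∀ η ∈ C.S, 0 < cf C η δ → ⟪P.μ C, η⟫ = 0 := by
        intro η hη hcfη
        have hterms : ∀ ξ ∈ C.S, 0 ≤ cf C ξ δ * ⟪P.μ C, ξ⟫ := by
          intro ξ hξ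
          apply mul_nonneg (hcoords ξ hξ)
          exact (pairing_nonneg_iff (root_ne_zero (mem_root hξ))).mp (hPs C ξ hξ)
        have hzero : ∑ ξ ∈ C.S, cf C ξ δ * ⟪P.μ C, ξ⟫ = 0 := by
          rw [← inner_expand C (P.μ C) δ]
          exact hμδinner
        have := (Finset.sum_eq_zero_iff_of_nonneg hterms).mp hzero η hη
        rcases mul_eq_zero.mp this with h' | h'
        · exfalso; linarith
        · exact h'
      have hμγ0inner : ⟪P.μ C, γ0⟫ = 0 := hμsupp γ0 hγ0 hcf0
      -- neighbor specialness: γ0 ⊥ support of δ minus γ0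
      have hiorth : ∀ η ∈ C.S, η ≠ γ0 → 0 < cf C η δ → ⟪γ0, η⟫ = 0 := by
        intro η hη hne hcfη
        obtain ⟨r, hr, heq⟩ := mu_sBase P C hγ0
        have hμC' : P.μ (sBase C γ0 hγ0) = P.μ C - (r : ℝ) • γ0 := by
          rw [← heq]; abel
        have hs := hPs (sBase C γ0 hγ0) (fireRoot η γ0) (fire_mem_sBase C hγ0 hη)
        have hTηΔ : fireRoot η γ0 ∈ R.Δ := R.reflect_mem γ0 hγ0Δ η (mem_root hη)
        have hTη0 : fireRoot η γ0 ≠ 0 := root_ne_zero hTηΔ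
        have hpg : pairing η γ0 * ⟪γ0, γ0⟫ = 2 * ⟪η, γ0⟫ := by
          rw [pairing_def]
          field_simp
        have hμη : ⟪P.μ C, η⟫ = 0 := hμsupp η hη hcfη
        have hcomm : ⟪η, γ0⟫ = ⟪γ0, η⟫ := real_inner_comm γ0 η
        have hexp2 : ⟪P.μ (sBase C γ0 hγ0), fireRoot η γ0⟫ = (r : ℝ) * ⟪γ0, η⟫ := by
          rw [hμC', fireRoot]
          simp only [inner_sub_left, inner_sub_right, real_inner_smul_left,
            real_inner_smul_right]
          rw [hμη, hμγ0inner]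
          rw [hcomm] at hpg
          linear_combination (r : ℝ) * hpg
        have h0 : 0 ≤ (r : ℝ) * ⟪γ0, η⟫ := by
          rw [← hexp2]
          exact (pairing_nonneg_iff hTη0).mp hs
        have hrpos : (0:ℝ) < (r : ℝ) := by exact_mod_cast (by omega : (0:ℤ) < r)
        have h1 : 0 ≤ ⟪γ0, η⟫ := nonneg_of_mul_nonneg_right h0 hrpos
        exact le_antisymm (obtuse C hγ0 hη (Ne.symm hne)) h1
      -- δ's inner product with γ0
      have hδγ0G : ⟪δ, γ0⟫ = cf C γ0 δ * ⟪γ0, γ0⟫ := by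
        have h1 : ⟪γ0, δ⟫ = ∑ η ∈ C.S, cf C η δ * ⟪γ0, η⟫ := inner_expand C γ0 δ
        have hsplit : cf C γ0 δ * ⟪γ0, γ0⟫
            + ∑ η ∈ C.S.erase γ0, cf C η δ * ⟪γ0, η⟫
            = ∑ η ∈ C.S, cf C η δ * ⟪γ0, η⟫ :=
          Finset.add_sum_erase C.S (fun η => cf C η δ * ⟪γ0, η⟫) hγ0
        rw [← hsplit] at h1
        have h2 : ∑ η ∈ C.S.erase γ0, cf C η δ * ⟪γ0, η⟫ = 0 := by
          apply Finset.sum_eq_zero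
          intro η hη
          have hη' := Finset.mem_of_mem_erase hη
          have hne := Finset.ne_of_mem_erase hη
          rcases (hcoords η hη').eq_or_lt with h' | h'
          · rw [← h', zero_mul]
          · rw [hiorth η hη' hne h', mul_zero]
        rw [h2, add_zero] at h1
        rw [real_inner_comm]
        exact h1
      -- pin down q' = 2, cf γ0 δ = 1
      have hncol : ∀ c : ℝ, δ ≠ c • γ0 := by
        intro c hc
        rcases R.reduced γ0 hγ0Δ c (hc ▸ hδ) with h1 | h1
        · rw [h1, one_smul] at hc; exact hδneγ0 hc
        · rw [h1, neg_smul, one_smul] at hc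
          have : cf C γ0 δ = -1 := by
            rw [hc, map_neg, cf_basis_self C hγ0]
          linarith
      have hlt4 : pairing δ γ0 * pairing γ0 δ < 4 := pairing_mul_lt_four hδ hγ0Δ hncol
      have hq'val : pairing δ γ0 = 2 * cf C γ0 δ := by
        rw [pairing_def, hδγ0G]
        field_simp
      have hcf1 : cf C γ0 δ = 1 := by
        obtain ⟨z, hz⟩ := cf_root_int C hγ0 hδ
        rw [hz] at hcf0 ⊢
        have hz1 : 1 ≤ z := by exact_mod_cast IsInt.one_le ⟨z, rfl⟩ hcf0
        have : 2 * (z:ℝ) < 4 := by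
          rw [hq'val, hz, hp'1, mul_one] at hlt4
          linarith
        have hz2 : z < 2 := by exact_mod_cast (by linarith : (z:ℝ) < 2)
        have : z = 1 := by omega
        rw [this]; norm_num
      have hδγ0' : ⟪δ, γ0⟫ = ⟪γ0, γ0⟫ := by rw [hδγ0G, hcf1, one_mul]
      have hDeq : ⟪δ, δ⟫ = 2 * ⟪γ0, γ0⟫ := by
        have : pairing γ0 δ = 1 := hp'1
        rw [pairing_def] at this
        have h2 : 2 * ⟪γ0, δ⟫ = ⟪δ, δ⟫ := by
          field_simp at this
          linarith
        have hcomm2 : ⟪γ0, δ⟫ = ⟪δ, γ0⟫ := real_inner_comm δ γ0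
        rw [← h2, hcomm2, hδγ0']
      -- δ1 := δ - γ0
      have hδ1Δ : δ - γ0 ∈ R.Δ := root_sub_mem hδ hγ0Δ hδneγ0 (by rw [hδγ0']; exact hGpos)
      have hμδ1 : ⟪P.μ C, δ - γ0⟫ = 0 := by
        rw [inner_sub_right, hμδinner, hμγ0inner, sub_zero]
      have hxδinner : ⟪x, δ⟫ = -⟪γ0, γ0⟫ := by
        rw [pairing_def] at hxδ1
        have := hDpos
        field_simp at hxδ1
        rw [hDeq] at hxδ1
        linarith
      have hxγ0 : 0 ≤ ⟪x, γ0⟫ := by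
        have hq2 : pairing δ γ0 = 2 := by rw [hq'val, hcf1]; norm_num
        have h1 : pairing x γ0 + pairing δ γ0 ≥ 2 := by
          rw [hvdecγ0] at hvγ0
          rw [hc0eq] at hvγ0
          linarith
        rw [hq2] at h1
        exact (pairing_nonneg_iff hγ00).mp (by linarith)
      -- the inner product ⟪δ1, μ - x⟫ is positive
      have hcfγ0μx : cf C γ0 (P.μ C - x) = 0 := by
        have h1 : c0 = cf C γ0 (P.μ C - x) - cf C γ0 δ := by
          rw [hc0, hv, show P.μ C - x - δ = (P.μ C - x) - δ by abel, map_sub]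
        rw [hcf1, hc0eq] at h1
        linarith
      have hinnerpos : 0 < ⟪δ - γ0, P.μ C - x⟫ := by
        have h1 : ⟪δ - γ0, P.μ C - x⟫ = ⟪P.μ C, δ - γ0⟫ - ⟪x, δ - γ0⟫ := by
          rw [real_inner_comm, inner_sub_left]
        rw [h1, hμδ1, inner_sub_right, hxδinner]
        have := hGpos
        linarith [hxγ0]
      -- extract η1
      have hexp3 : ⟪δ - γ0, P.μ C - x⟫
          = ∑ η ∈ C.S, cf C η (P.μ C - x) * ⟪δ - γ0, η⟫ := inner_expand C _ _
      have hex1 : ∃ η1 ∈ C.S.erase γ0, 0 < cf C η1 (P.μ C - x) * ⟪δ - γ0, η1⟫ := by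
        by_contra hcon
        push_neg at hcon
        have hsum0 : ∑ η ∈ C.S.erase γ0, cf C η (P.μ C - x) * ⟪δ - γ0, η⟫ ≤ 0 :=
          Finset.sum_nonpos hcon
        have hsplit : cf C γ0 (P.μ C - x) * ⟪δ - γ0, γ0⟫
            + ∑ η ∈ C.S.erase γ0, cf C η (P.μ C - x) * ⟪δ - γ0, η⟫
            = ∑ η ∈ C.S, cf C η (P.μ C - x) * ⟪δ - γ0, η⟫ :=
          Finset.add_sum_erase C.S (fun η => cf C η (P.μ C - x) * ⟪δ - γ0, η⟫) hγ0
        rw [← hsplit, hcfγ0μx, zero_mul, zero_add] at hexp3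
        linarith [hinnerpos, hexp3 ▸ hsum0]
      obtain ⟨η1, hη1er, hη1pos⟩ := hex1
      have hη1mem := Finset.mem_of_mem_erase hη1er
      have hη1ne := Finset.ne_of_mem_erase hη1er
      have hη1cf : 0 < cf C η1 (P.μ C - x) := by
        rcases mul_pos_iff.mp hη1pos with ⟨h, _⟩ | ⟨h, _⟩
        · exact h
        · exfalso; linarith [hx1 C η1 hη1mem]
      have hη1ip : 0 < ⟪δ - γ0, η1⟫ := by
        rcases mul_pos_iff.mp hη1pos with ⟨_, h⟩ | ⟨h', _⟩
        · exact h
        · exfalso; linarith [hx1 C η1 hη1mem]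
      -- final contradiction
      rcases (hcoords η1 hη1mem).eq_or_lt with hcfη1 | hcfη1
      · -- cf η1 δ = 0
        have hδ1exp : ⟪η1, δ - γ0⟫ = ∑ ξ ∈ C.S, cf C ξ (δ - γ0) * ⟪η1, ξ⟫ :=
          inner_expand C η1 (δ - γ0)
        have hnp : ∑ ξ ∈ C.S, cf C ξ (δ - γ0) * ⟪η1, ξ⟫ ≤ 0 := by
          apply Finset.sum_nonpos
          intro ξ hξ
          by_cases hξγ0 : ξ = γ0
          · subst hξγ0
            rw [map_sub, hcf1, cf_basis_self C hγ0]
            norm_num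
          · by_cases hξη1 : ξ = η1
            · subst hξη1
              rw [map_sub, ← hcfη1, cf_basis_ne C hξ hγ0 (Ne.symm hξγ0)]
              norm_num
            · apply mul_nonpos_of_nonneg_of_nonpos
              · rw [map_sub, cf_basis_ne C hξ hγ0 (Ne.symm hξγ0), sub_zero]
                exact hcoords ξ hξ
              · exact obtuse C hη1mem hξ (fun h => hξη1 h.symm)
        rw [← hδ1exp, real_inner_comm] at hnp
        linarith
      · -- cf η1 δ > 0
        have horth := hiorth η1 hη1mem hη1ne hcfη1
        have : ⟪δ, η1⟫ = ⟪δ - γ0, η1⟫ + ⟪γ0, η1⟫ := by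
          rw [← inner_add_left]
          norm_num
        rw [horth, add_zero] at this
        have hcontra := hsec η1 hη1mem hη1ne
        rw [this] at hcontra
        linarith

end Stmt19
namespace Stmt19

variable {V : Type*} [NormedAddCommGroup V] [InnerProductSpace ℝ V] {R : RootSystemData V}

local notation "⟪" x ", " y "⟫" => @inner ℝ _ _ x y

attribute [local instance] Classical.propDecidable

/-- Reflection in a simple root permutes the other positive roots. -/
lemma fire_pos (B : Base R) {α β : V} (hα : α ∈ B.S) (hβpos : PosR B β) (hne : β ≠ α) :
    PosR B (fireRoot β α) := by
  have hαΔ : α ∈ R.Δ := mem_root hα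
  have hα0 : α ≠ 0 := root_ne_zero hαΔ
  have hTβ : fireRoot β α ∈ R.Δ := R.reflect_mem α hαΔ β hβpos.1
  obtain ⟨η1, hη1, hη1ne, hη1pos⟩ := exists_other_coord B hβpos.1 hβpos.2 hα hne
  refine ⟨hTβ, ?_⟩
  rcases root_dichotomy B hTβ with h | h
  · exact h
  · exfalso
    have := h η1 hη1
    rw [cf_fire, cf_basis_ne B hη1 hα (Ne.symm hη1ne), mul_zero, sub_zero] at this
    linarith

lemma winning_fire_j (B : Base R) {x α : V} (hwin : WinningCrit B x) (hα : α ∈ B.S)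
    (hm1 : pairing x α = -1) : WinningCrit B (x + α) := by
  have hαΔ : α ∈ R.Δ := mem_root hα
  have hα0 : α ≠ 0 := root_ne_zero hαΔ
  have hfire : x + α = fireRoot x α := by
    rw [fireRoot, hm1, neg_smul, one_smul, sub_neg_eq_add]
  intro β hβ
  by_cases hβα : β = α
  · subst hβα
    rw [pairing_add_left, hm1, pairing_self hα0]
    norm_num
  · rw [hfire, pairing_fireRoot_left]
    have hTβpos : PosR B (fireRoot β α) := fire_pos B hα (isPos_posR hβ) hβα
    have h1 := hwin _ hTβpos.isPos
    rw [pairing_fireRoot_right' x β hα0] at h1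
    linarith

lemma winning_fire_k (B : Base R) {x α : V} (hwin : WinningCrit B x) (hα : α ∈ B.S)
    (hk : 1 ≤ pairing x α) : WinningCrit B (x - α) := by
  have hαΔ : α ∈ R.Δ := mem_root hα
  have hα0 : α ≠ 0 := root_ne_zero hαΔ
  intro β hβ
  by_cases hβα : β = α
  · subst hβα
    rw [pairing_sub_left, pairing_self hα0]
    linarith
  · rw [pairing_sub_left]
    have hβΔ : β ∈ R.Δ := hβ.1
    have hβ0 : β ≠ 0 := root_ne_zero hβΔ
    by_cases hpneg : pairing α β ≤ 0
    · have := hwin β hβ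
      linarith
    · push_neg at hpneg
      have hp1 : 1 ≤ pairing α β :=
        IsInt.one_le (R.crystallographic α hαΔ β hβΔ) hpneg
      have hTβpos : PosR B (fireRoot β α) := fire_pos B hα (isPos_posR hβ) hβα
      have h1 := hwin _ hTβpos.isPos
      rw [pairing_fireRoot_right' x β hα0] at h1
      nlinarith

/-- A single legal move: if `x ∈ Λ(P)` and `⟨x, δ^∨⟩ ≤ -1` then `x + δ ∈ Λ(P)`. -/
lemma move_mem (P : AmplePolytope R) (hPs : IsSpecial P) (C0 : Base R) {x δ : V}
    (hx : x ∈ latticePts P) (hδ : δ ∈ R.Δ) (hpx : pairing x δ ≤ -1) :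
    x + δ ∈ latticePts P := by
  obtain ⟨hxc, hxl⟩ := hx
  have hx1 : ∀ C : Base R, ∀ γ ∈ C.S, 0 ≤ cf C γ (P.μ C - x) :=
    fun C γ hγ => carrier_coords P hxc C hγ
  constructor
  · apply coords_carrier P _ C0
    intro C γ hγ
    have hsub : P.μ C - (x + δ) = P.μ C - x - δ := by abel
    rw [hsub]
    rcases root_dichotomy C hδ with hd | hd
    · set Sδ : ℝ := ∑ γ1 ∈ C.S, cf C γ1 δ with hSδ
      have hN : Sδ ≤ (⌈Sδ⌉₊ : ℝ) := Nat.le_ceil Sδ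
      exact main_lemma P hPs x hx1 hxl ⌈Sδ⌉₊ C δ hδ hd hN hpx γ hγ
    · rw [show P.μ C - x - δ = (P.μ C - x) - δ by abel, map_sub]
      have := hx1 C γ hγ
      have := hd γ hγ
      linarith
  · intro B
    have h1 : x + δ - P.μ B = (x - P.μ B) + δ := by abel
    rw [h1]
    exact AddSubgroup.add_mem _ (hxl B) (AddSubgroup.subset_closure hδ)

end Stmt19

open Stmt19

/-- Simple moves preserve membership in `Λ(P₁) × ⋯ × Λ(P_m)` and preserve
winningness of every entry: if each `x_ℓ ∈ Λ(P_ℓ)` is winning (`⟨x_ℓ, β^∨⟩ ≥ -1` for all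
positive roots `β`), `α` is a simple root, and `j ≠ k` are indices with
`⟨x_j, α^∨⟩ ≤ -1` and `⟨x_k, α^∨⟩ ≥ 1`, then the tuple obtained by replacing `x_j` with
`x_j + α` and `x_k` with `x_k - α` again lies in `Λ(P₁) × ⋯ × Λ(P_m)` and consists of
winning elements. -/
theorem stmt19 {V : Type*} [NormedAddCommGroup V] [InnerProductSpace ℝ V]
    [FiniteDimensional ℝ V] {R : RootSystemData V} (B : Base R) (m : ℕ)
    (P : Fin m → AmplePolytope R) (hP : ∀ i, IsSpecial (P i))
    (x : Fin m → V) (hx : ∀ i, x i ∈ latticePts (P i))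
    (hwin : ∀ i, WinningCrit B (x i))
    (α : V) (hα : α ∈ B.S) (j k : Fin m) (hjk : j ≠ k)
    (hj : pairing (x j) α ≤ -1) (hk : 1 ≤ pairing (x k) α)
    (x' : Fin m → V)
    (hx'j : x' j = x j + α) (hx'k : x' k = x k - α)
    (hx'other : ∀ l : Fin m, l ≠ j → l ≠ k → x' l = x l) :
    (∀ i, x' i ∈ latticePts (P i)) ∧ ∀ i, WinningCrit B (x' i) := by
  classical
  have hαΔ : α ∈ R.Δ := mem_root hα
  have hm1 : pairing (x j) α = -1 :=
    le_antisymm hj (hwin j α (simple_isPos hα))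
  constructor
  · intro i
    by_cases hij : i = j
    · subst hij
      rw [hx'j]
      exact move_mem (P i) (hP i) B (hx i) hαΔ hj
    · by_cases hik : i = k
      · subst hik
        rw [hx'k, sub_eq_add_neg]
        apply move_mem (P i) (hP i) B (hx i) (R.neg_mem α hαΔ)
        rw [pairing_neg_right]
        linarith
      · rw [hx'other i hij hik]
        exact hx i
  · intro i
    by_cases hij : i = j
    · subst hij
      rw [hx'j]
      exact winning_fire_j B (hwin i) hα hm1
    · by_cases hik : i = k
      · subst hik
        rw [hx'k]
        exact winning_fire_k B (hwin i) hα hk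
      · rw [hx'other i hij hik]
        exact hwin i
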